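/- For 0 < q < 1 and integers n, m ≥ 2, Bradley's q-multiple zeta values satisfy: ζ_q(n)·ζ_q(m) = ζ_q(n,m) + ζ_q(m,n) + ζ_q(n+m) + (1−q)·ζ_q(n+m−1). -/

import Mathlib

/-- The q-number `[m]_q = (1−qᵐ)/(1−q)`. -/
noncomputable def qnum (q : ℝ) (m : ℕ) : ℝ := (1 - q ^ m) / (1 - q)

/-- Bradley's qMZV of length one: `ζ_q(n) = ∑_{m>0} q^{(n−1)m}/[m]_qⁿ`. -/
noncomputable def zetaq1 (q : ℝ) (n : ℕ) : ℝ :=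
  ∑' m : ℕ, q ^ ((n - 1) * (m + 1)) / qnum q (m + 1) ^ n

/-- Bradley's qMZV of length two. -/
noncomputable def zetaq2 (q : ℝ) (a b : ℕ) : ℝ :=
  ∑' p : ℕ × ℕ, if p.2 < p.1 ∧ 0 < p.2 then
    q ^ ((a - 1) * p.1 + (b - 1) * p.2) / (qnum q p.1 ^ a * qnum q p.2 ^ b) else 0

/-- The summand of `zetaq1`. -/
noncomputable def termq (q : ℝ) (a k : ℕ) : ℝ := q ^ ((a - 1) * k) / qnum q k ^ a

lemma qnum_pos {q : ℝ} (hq0 : 0 < q) (hq1 : q < 1) {k : ℕ} (hk : 1 ≤ k) :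
    0 < qnum q k := by
  unfold qnum
  apply div_pos
  · have : q ^ k < 1 := pow_lt_one₀ hq0.le hq1 (by omega)
    linarith
  · linarith

lemma one_le_qnum {q : ℝ} (hq0 : 0 < q) (hq1 : q < 1) {k : ℕ} (hk : 1 ≤ k) :
    1 ≤ qnum q k := by
  unfold qnum
  rw [le_div_iff₀ (by linarith)]
  have h : q ^ k ≤ q := by
    calc q ^ k ≤ q ^ 1 := pow_le_pow_of_le_one hq0.le hq1.le hk
    _ = q := pow_one q
  linarith

lemma termq_nonneg {q : ℝ} (hq0 : 0 < q) (hq1 : q < 1) (a : ℕ) {k : ℕ} (hk : 1 ≤ k) :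
    0 ≤ termq q a k :=
  div_nonneg (pow_nonneg hq0.le _) (pow_nonneg (qnum_pos hq0 hq1 hk).le _)

lemma termq_le {q : ℝ} (hq0 : 0 < q) (hq1 : q < 1) {a : ℕ} (ha : 2 ≤ a) (k : ℕ) :
    termq q a (k + 1) ≤ q ^ k := by
  unfold termq
  have h1 : q ^ ((a - 1) * (k + 1)) ≤ q ^ k := by
    apply pow_le_pow_of_le_one hq0.le hq1.le
    have h2 : 1 ≤ a - 1 := by omega
    calc k ≤ k + 1 := by omega
    _ = 1 * (k + 1) := (one_mul _).symm
    _ ≤ (a - 1) * (k + 1) := Nat.mul_le_mul_right _ h2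
  calc q ^ ((a - 1) * (k + 1)) / qnum q (k + 1) ^ a ≤ q ^ ((a - 1) * (k + 1)) :=
        div_le_self (pow_nonneg hq0.le _) (one_le_pow₀ (one_le_qnum hq0 hq1 (by omega)))
  _ ≤ q ^ k := h1

lemma summable_termq {q : ℝ} (hq0 : 0 < q) (hq1 : q < 1) {a : ℕ} (ha : 2 ≤ a) :
    Summable (fun k : ℕ => termq q a (k + 1)) :=
  Summable.of_nonneg_of_le (fun k => termq_nonneg hq0 hq1 a (by omega))
    (fun k => termq_le hq0 hq1 ha k)
    (summable_geometric_of_lt_one hq0.le hq1)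

lemma zetaq1_eq (q : ℝ) (n : ℕ) : zetaq1 q n = ∑' k : ℕ, termq q n (k + 1) := rfl

lemma diag_identity {q : ℝ} (hq0 : 0 < q) (hq1 : q < 1) {n m : ℕ}
    (hn : 2 ≤ n) (hm : 2 ≤ m) {k : ℕ} (hk : 1 ≤ k) :
    termq q n k * termq q m k = termq q (n + m) k + (1 - q) * termq q (n + m - 1) k := by
  have hQ : 0 < qnum q k := qnum_pos hq0 hq1 hk
  have h1q : (1 : ℝ) - q ≠ 0 := by linarith
  have hQk : (1 - q) * qnum q k = 1 - q ^ k := by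
    unfold qnum
    rw [mul_comm, div_mul_cancel₀ _ h1q]
  unfold termq
  have e1 : (n + m - 1) * k = (n + m - 2) * k + k := by
    have h : n + m - 1 = (n + m - 2) + 1 := by omega
    rw [h]; ring
  have e2 : (n - 1) * k + (m - 1) * k = (n + m - 2) * k := by
    have h : (n - 1) + (m - 1) = n + m - 2 := by omega
    rw [← add_mul, h]
  have e4 : n + m - 1 - 1 = n + m - 2 := by omega
  have hpow : qnum q k ^ n * qnum q k ^ m = qnum q k ^ (n + m - 1) * qnum q k := by
    rw [← pow_add, ← pow_succ]
    congr 1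
    omega
  have hpow2 : qnum q k ^ (n + m) = qnum q k ^ (n + m - 1) * qnum q k := by
    rw [← pow_succ]
    congr 1
    omega
  rw [div_mul_div_comm, ← pow_add q, e2, hpow, e4, e1, pow_add q, hpow2]
  have h2 : (1 - q) * (q ^ ((n + m - 2) * k) / qnum q k ^ (n + m - 1)) =
      q ^ ((n + m - 2) * k) * (1 - q ^ k) / (qnum q k ^ (n + m - 1) * qnum q k) := by
    rw [← hQk]
    field_simp
  rw [h2, ← add_div]
  congr 1
  ring

/-- Quasi-shuffle product for Bradley's qMZVs. -/
theorem zetaq_quasi_shuffle (q : ℝ) (hq0 : 0 < q) (hq1 : q < 1) (n m : ℕ)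
    (hn : 2 ≤ n) (hm : 2 ≤ m) :
    zetaq1 q n * zetaq1 q m =
      zetaq2 q n m + zetaq2 q m n + zetaq1 q (n + m) + (1 - q) * zetaq1 q (n + m - 1) := by
  set F : ℕ → ℝ := fun k => termq q n (k + 1) with hF_def
  set G : ℕ → ℝ := fun k => termq q m (k + 1) with hG_def
  have hF : Summable F := summable_termq hq0 hq1 hn
  have hG : Summable G := summable_termq hq0 hq1 hm
  have hFnn : ∀ k, 0 ≤ F k := fun k => termq_nonneg hq0 hq1 n (by omega)
  have hGnn : ∀ k, 0 ≤ G k := fun k => termq_nonneg hq0 hq1 m (by omega)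
  have hFnorm : Summable fun k => ‖F k‖ := by
    simpa [Real.norm_eq_abs] using hF.abs
  have hGnorm : Summable fun k => ‖G k‖ := by
    simpa [Real.norm_eq_abs] using hG.abs
  have hFG : Summable (fun p : ℕ × ℕ => F p.1 * G p.2) :=
    summable_mul_of_summable_norm hFnorm hGnorm
  have hFGnn : ∀ p : ℕ × ℕ, 0 ≤ F p.1 * G p.2 := fun p => mul_nonneg (hFnn _) (hGnn _)
  -- the three pieces
  set gLT : ℕ × ℕ → ℝ := fun p => if p.2 < p.1 then F p.1 * G p.2 else 0 with hgLT_def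
  set gGT : ℕ × ℕ → ℝ := fun p => if p.1 < p.2 then F p.1 * G p.2 else 0 with hgGT_def
  set gEQ : ℕ × ℕ → ℝ := fun p => if p.1 = p.2 then F p.1 * G p.2 else 0 with hgEQ_def
  have hsplit : ∀ p : ℕ × ℕ, F p.1 * G p.2 = gLT p + gGT p + gEQ p := by
    intro p
    simp only [hgLT_def, hgGT_def, hgEQ_def]
    rcases lt_trichotomy p.2 p.1 with h | h | h
    · simp [h, asymm h, h.ne']
    · simp [h]
    · simp [h, asymm h, h.ne]
  have hbound : ∀ (g : ℕ × ℕ → ℝ), (∀ p, 0 ≤ g p) → (∀ p, g p ≤ F p.1 * G p.2) →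
      Summable g := fun g h1 h2 => Summable.of_nonneg_of_le h1 h2 hFG
  have hLTs : Summable gLT := hbound _
    (fun p => by simp only [hgLT_def]; split_ifs; exacts [hFGnn p, le_rfl])
    (fun p => by simp only [hgLT_def]; split_ifs; exacts [le_rfl, hFGnn p])
  have hGTs : Summable gGT := hbound _
    (fun p => by simp only [hgGT_def]; split_ifs; exacts [hFGnn p, le_rfl])
    (fun p => by simp only [hgGT_def]; split_ifs; exacts [le_rfl, hFGnn p])
  have hEQs : Summable gEQ := hbound _
    (fun p => by simp only [hgEQ_def]; split_ifs; exacts [hFGnn p, le_rfl])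
    (fun p => by simp only [hgEQ_def]; split_ifs; exacts [le_rfl, hFGnn p])
  have step1 : zetaq1 q n * zetaq1 q m = ∑' p : ℕ × ℕ, F p.1 * G p.2 := by
    rw [zetaq1_eq, zetaq1_eq]
    exact tsum_mul_tsum_of_summable_norm hFnorm hGnorm
  have step2 : (∑' p : ℕ × ℕ, F p.1 * G p.2) =
      (∑' p, gLT p) + (∑' p, gGT p) + (∑' p, gEQ p) := by
    rw [tsum_congr hsplit, (hLTs.add hGTs).tsum_add hEQs, hLTs.tsum_add hGTs]
  -- the shift injection
  set e : ℕ × ℕ → ℕ × ℕ := fun p => (p.1 + 1, p.2 + 1) with he_def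
  have he : Function.Injective e := by
    intro a b h
    simp only [he_def, Prod.mk.injEq] at h
    exact Prod.ext (by omega) (by omega)
  -- LT piece = zetaq2 q n m
  have stepLT : (∑' p, gLT p) = zetaq2 q n m := by
    unfold zetaq2
    set f : ℕ × ℕ → ℝ := fun p => if p.2 < p.1 ∧ 0 < p.2 then
      q ^ ((n - 1) * p.1 + (m - 1) * p.2) / (qnum q p.1 ^ n * qnum q p.2 ^ m) else 0 with hf_def
    have hsupp : Function.support f ⊆ Set.range e := by
      intro p hp
      simp only [hf_def, Function.mem_support, ne_eq, ite_eq_right_iff, not_forall] at hp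
      obtain ⟨⟨h1, h2⟩, -⟩ := hp
      exact ⟨(p.1 - 1, p.2 - 1), by simp only [he_def]; exact Prod.ext (by omega) (by omega)⟩
    rw [← he.tsum_eq hsupp]
    apply tsum_congr
    intro p
    simp only [hf_def, he_def, hgLT_def, hF_def, hG_def]
    by_cases h : p.2 < p.1
    · rw [if_pos h, if_pos (⟨by omega, by omega⟩ : p.2 + 1 < p.1 + 1 ∧ 0 < p.2 + 1)]
      unfold termq
      rw [pow_add, div_mul_div_comm]
    · rw [if_neg h, if_neg (fun hcon => h (by omega))]
  -- GT piece = zetaq2 q m n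
  have stepGT : (∑' p, gGT p) = zetaq2 q m n := by
    have hswap : (∑' p : ℕ × ℕ, gGT p) = ∑' p : ℕ × ℕ, gGT (Prod.swap p) :=
      ((Equiv.prodComm ℕ ℕ).tsum_eq gGT).symm
    rw [hswap]
    unfold zetaq2
    set f : ℕ × ℕ → ℝ := fun p => if p.2 < p.1 ∧ 0 < p.2 then
      q ^ ((m - 1) * p.1 + (n - 1) * p.2) / (qnum q p.1 ^ m * qnum q p.2 ^ n) else 0 with hf_def
    have hsupp : Function.support f ⊆ Set.range e := by
      intro p hp
      simp only [hf_def, Function.mem_support, ne_eq, ite_eq_right_iff, not_forall] at hp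
      obtain ⟨⟨h1, h2⟩, -⟩ := hp
      exact ⟨(p.1 - 1, p.2 - 1), by simp only [he_def]; exact Prod.ext (by omega) (by omega)⟩
    rw [← he.tsum_eq hsupp]
    apply tsum_congr
    intro p
    simp only [hf_def, he_def, hgGT_def, hF_def, hG_def, Prod.fst_swap, Prod.snd_swap]
    by_cases h : p.2 < p.1
    · rw [if_pos h, if_pos (⟨by omega, by omega⟩ : p.2 + 1 < p.1 + 1 ∧ 0 < p.2 + 1)]
      unfold termq
      rw [pow_add, div_mul_div_comm]
      ring
    · rw [if_neg h, if_neg (fun hcon => h (by omega))]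
  -- EQ piece
  have stepEQ : (∑' p, gEQ p) = zetaq1 q (n + m) + (1 - q) * zetaq1 q (n + m - 1) := by
    set d : ℕ → ℕ × ℕ := fun k => (k, k) with hd_def
    have hd : Function.Injective d := fun a b h => (Prod.ext_iff.mp h).1
    have hsupp : Function.support gEQ ⊆ Set.range d := by
      intro p hp
      simp only [hgEQ_def, Function.mem_support, ne_eq, ite_eq_right_iff, not_forall] at hp
      exact ⟨p.1, Prod.ext rfl hp.1⟩
    rw [← hd.tsum_eq hsupp]
    have hdiag : ∀ k : ℕ, gEQ (d k) =
        termq q (n + m) (k + 1) + (1 - q) * termq q (n + m - 1) (k + 1) := by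
      intro k
      have h0 : gEQ (d k) = F k * G k := by simp [hgEQ_def, hd_def]
      rw [h0]
      exact diag_identity hq0 hq1 hn hm (by omega)
    rw [tsum_congr hdiag, Summable.tsum_add (summable_termq hq0 hq1 (by omega))
      ((summable_termq hq0 hq1 (by omega : 2 ≤ n + m - 1)).mul_left (1 - q)),
      tsum_mul_left, zetaq1_eq, zetaq1_eq]
  rw [step1, step2, stepLT, stepGT, stepEQ]
  ring
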